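/- Under the Poisson channel Z | X ∼ Poisson(γX), conditional moments factor into products of consecutive conditional means: for every positive integer k and nonnegative integer z (with relevant probabilities positive), E[(γX)^k | Z = z] = ∏_{i=0}^{k−1} E[γX | Z = z+i]. -/

import Mathlib

open MeasureTheory

/-- Under the Poisson channel `Z | X ∼ Poisson(γX)`, with conditional expectations defined by
`E[f(X) | Z = z] = E[f(X)·e^{−γX}(γX)^z] / E[e^{−γX}(γX)^z]`, the conditional moments factor
into products of consecutive conditional means: for every `k ≥ 1` and `z ≥ 0`,
`E[(γX)^k | Z = z] = ∏_{i=0}^{k−1} E[γX | Z = z+i]`, provided the relevant denominators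
are positive. -/
theorem stmt_11 {Ω : Type*} [MeasurableSpace Ω] (μ : Measure Ω) [IsProbabilityMeasure μ]
    (X : Ω → ℝ) (hXm : Measurable X) (hXnn : ∀ ω, 0 ≤ X ω)
    (γ : ℝ) (hγ : 0 < γ) (k : ℕ) (hk : 1 ≤ k)
    (hXk : Integrable (fun ω => X ω ^ k) μ) (z : ℕ)
    (hpos : ∀ i : ℕ, 0 < ∫ ω, Real.exp (-(γ * X ω)) * (γ * X ω) ^ (z + i) ∂μ) :
    (∫ ω, (γ * X ω) ^ k * (Real.exp (-(γ * X ω)) * (γ * X ω) ^ z) ∂μ)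
        / (∫ ω, Real.exp (-(γ * X ω)) * (γ * X ω) ^ z ∂μ)
      = ∏ i ∈ Finset.range k,
          (∫ ω, (γ * X ω) * (Real.exp (-(γ * X ω)) * (γ * X ω) ^ (z + i)) ∂μ)
            / (∫ ω, Real.exp (-(γ * X ω)) * (γ * X ω) ^ (z + i) ∂μ) := by
  clear hk hXk
  set E : ℕ → ℝ := fun n => ∫ ω, Real.exp (-(γ * X ω)) * (γ * X ω) ^ n ∂μ with hE
  -- rewrite the numerators as E of shifted indices
  have hnum : ∀ m n : ℕ,
      (∫ ω, (γ * X ω) ^ m * (Real.exp (-(γ * X ω)) * (γ * X ω) ^ n) ∂μ) = E (n + m) := by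
    intro m n
    rw [hE]
    congr 1
    funext ω
    rw [pow_add]
    ring
  have hnum1 : ∀ n : ℕ,
      (∫ ω, (γ * X ω) * (Real.exp (-(γ * X ω)) * (γ * X ω) ^ n) ∂μ) = E (n + 1) := by
    intro n
    have := hnum 1 n
    simpa using this
  rw [hnum k z]
  have hgen : ∀ m : ℕ, E (z + m) / E z
      = ∏ i ∈ Finset.range m,
          (∫ ω, (γ * X ω) * (Real.exp (-(γ * X ω)) * (γ * X ω) ^ (z + i)) ∂μ)
            / (∫ ω, Real.exp (-(γ * X ω)) * (γ * X ω) ^ (z + i) ∂μ) := by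
    intro m
    induction m with
    | zero =>
        simp only [Nat.add_zero, Finset.range_zero, Finset.prod_empty]
        exact div_self (ne_of_gt (by simpa using hpos 0))
    | succ m ih =>
        rw [Finset.prod_range_succ, ← ih, hnum1 (z + m)]
        have h1 : E (z + m) ≠ 0 := ne_of_gt (hpos m)
        have h2 : E z ≠ 0 := ne_of_gt (by simpa using hpos 0)
        have h3 : z + (m + 1) = (z + m) + 1 := by omega
        rw [h3]
        have h4 : (∫ ω, Real.exp (-(γ * X ω)) * (γ * X ω) ^ (z + m) ∂μ) = E (z + m) := rfl
        rw [h4]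
        field_simp
  exact hgen k
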